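/- The ℤ-span in F of the restriction elements {r(λ,p) : (λ,p) ∈ ℤ^n_{++} × ℤ} equals the ℤ-span of the set consisting of (i) the basis elements e_{(μ,q)} with μ_{n−1} = 0 and q ∈ ℤ, and (ii) the elements e_{(μ,q+s)} + e_{(μ*,q−s)} with μ_{n−1} ≠ 0 and q,s ∈ ℤ, where μ ranges over ℤ^{n−1}_{++}. (Description of the image Res(K⁰(K)) of the restriction map for G = SO₀(2,2n).) -/

import Mathlib

open scoped Classical

/-- The predicate defining `ℤ^k_{++}`: `λ_1 ≥ … ≥ λ_{k−1} ≥ |λ_k|`, equivalently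
`|λ_j| ≤ λ_i` for all `i < j`. -/
def IsPP {k : ℕ} (l : Fin k → ℤ) : Prop := ∀ i j : Fin k, i < j → |l j| ≤ l i

/-- `ℤ^k_{++}` as a type. -/
abbrev ZPP (k : ℕ) : Type := {l : Fin k → ℤ // IsPP l}

/-- The free `ℤ`-module `F = K⁰(K_M)` on the basis `ℤ^{n−1}_{++} × ℤ` for
`G = SO₀(2,2n)` (here `n = n0 + 2`). -/
abbrev FSO (n0 : ℕ) : Type := (ZPP (n0 + 1) × ℤ) →₀ ℤ

variable {n0 : ℕ}

/-- The interlacing conditions of the branching law from `SO(2n)` to `SO(2n−2)`: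
`λ_i ≥ μ_i ≥ λ_{i+2}` for `1 ≤ i ≤ n−3`, `λ_{n−2} ≥ μ_{n−2} ≥ |λ_n|`, and
`λ_{n−1} ≥ |μ_{n−1}|` (written `0`-indexed, with `n = n0 + 2`). -/
def Interlace (l : Fin (n0 + 2) → ℤ) (μ : Fin (n0 + 1) → ℤ) : Prop :=
  (∀ i : ℕ, (h : i + 2 ≤ n0) →
      μ ⟨i, by omega⟩ ≤ l ⟨i, by omega⟩ ∧ l ⟨i + 2, by omega⟩ ≤ μ ⟨i, by omega⟩) ∧
  (∀ _ : 1 ≤ n0,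
      μ ⟨n0 - 1, by omega⟩ ≤ l ⟨n0 - 1, by omega⟩ ∧
        |l ⟨n0 + 1, by omega⟩| ≤ μ ⟨n0 - 1, by omega⟩) ∧
  |μ ⟨n0, by omega⟩| ≤ l ⟨n0, by omega⟩

/-- The tuple `(ℓ_1, …, ℓ_{n−1})` of the branching law (written `0`-indexed):
`ℓ_1 = λ_1 − max(λ_2, μ_1)`, `ℓ_i = min(λ_i, μ_{i−1}) − max(λ_{i+1}, μ_i)` for
`2 ≤ i ≤ n−2`, and `ℓ_{n−1} = min(λ_{n−1}, μ_{n−2}) − max(|λ_n|, |μ_{n−1}|)`. -/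
def lvec (l : Fin (n0 + 2) → ℤ) (μ : Fin (n0 + 1) → ℤ) : Fin (n0 + 1) → ℤ := fun i =>
  (if (i : ℕ) = 0 then l i.castSucc
    else min (l i.castSucc) (μ ⟨(i : ℕ) - 1, by have := i.isLt; omega⟩)) -
  (if (i : ℕ) = n0 then max |l (Fin.last (n0 + 1))| |μ (Fin.last n0)|
    else max (l i.succ) (μ i))

/-- The number `ℓ_n = sgn(λ_n)·sgn(μ_{n−1})·min(|λ_n|, |μ_{n−1}|)`. -/
def lsgn (l : Fin (n0 + 2) → ℤ) (μ : Fin (n0 + 1) → ℤ) : ℤ :=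
  Int.sign (l (Fin.last (n0 + 1))) * Int.sign (μ (Fin.last n0)) *
    min |l (Fin.last (n0 + 1))| |μ (Fin.last n0)|

/-- The multiplicity `m(k) = #{(k_1,…,k_{n−1}) ∈ ℤ^{n−1} : 0 ≤ k_i ≤ ℓ_i, Σ_i k_i = k}`. -/
noncomputable def mult (l : Fin (n0 + 2) → ℤ) (μ : Fin (n0 + 1) → ℤ) (k : ℤ) : ℕ :=
  ((Finset.Icc (0 : Fin (n0 + 1) → ℤ) (lvec l μ)).filter fun t => (∑ i, t i) = k).card

/-- The restriction element
`r(λ,p) = Σ_μ Σ_{k=0}^{ℓ} m(k) · e_{(μ, p+ℓ_n+2k−ℓ)}`, the class of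
`π_{λ,p}|_{K_M}` (the outer sum is over `μ ∈ ℤ^{n−1}_{++}` satisfying the
interlacing conditions, all of which lie in the box `[−λ_1, λ_1]^{n−1}`). -/
noncomputable def rSO (l : Fin (n0 + 2) → ℤ) (p : ℤ) : FSO n0 :=
  ∑ μ ∈ Finset.Icc (fun _ : Fin (n0 + 1) => -(l 0)) (fun _ : Fin (n0 + 1) => l 0),
    if h : IsPP μ ∧ Interlace l μ then
      ∑ k ∈ Finset.Icc (0 : ℤ) (∑ i, lvec l μ i),
        (mult l μ k : ℤ) •
          Finsupp.single ((⟨μ, h.1⟩ : ZPP (n0 + 1)),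
            p + lsgn l μ + 2 * k - ∑ i, lvec l μ i) 1
    else 0

/-- `μ* = (μ_1, …, μ_{n−2}, −μ_{n−1})`. -/
def starPP (μ : ZPP (n0 + 1)) : ZPP (n0 + 1) :=
  ⟨fun i => if i = Fin.last n0 then -(μ.1 i) else μ.1 i, by
    intro i j hij
    dsimp only
    have hij' : (i : ℕ) < (j : ℕ) := hij
    have hi : ¬(i = Fin.last n0) := by
      intro h
      have : (i : ℕ) = n0 := by simpa using congrArg Fin.val h
      have := j.isLt
      omega
    rw [if_neg hi]
    by_cases hj : j = Fin.last n0
    · rw [if_pos hj, abs_neg]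
      exact μ.2 i j hij
    · rw [if_neg hj]
      exact μ.2 i j hij⟩
/-! ### Auxiliary: negation of the last coordinate -/

def negLast (μ : Fin (n0 + 1) → ℤ) : Fin (n0 + 1) → ℤ :=
  fun i => if i = Fin.last n0 then -(μ i) else μ i

lemma negLast_last (μ : Fin (n0 + 1) → ℤ) : negLast μ (Fin.last n0) = -(μ (Fin.last n0)) :=
  if_pos rfl

lemma negLast_apply_ne (μ : Fin (n0 + 1) → ℤ) (i : Fin (n0 + 1)) (h : (i : ℕ) ≠ n0) :
    negLast μ i = μ i := by
  apply if_neg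
  intro e
  exact h (by simpa using congrArg Fin.val e)

lemma abs_negLast (μ : Fin (n0 + 1) → ℤ) (i : Fin (n0 + 1)) : |negLast μ i| = |μ i| := by
  by_cases h : i = Fin.last n0
  · rw [h, negLast_last, abs_neg]
  · rw [negLast_apply_ne μ i (by intro e; exact h (Fin.ext e))]

lemma negLast_negLast (μ : Fin (n0 + 1) → ℤ) : negLast (negLast μ) = μ := by
  funext i
  by_cases h : i = Fin.last n0
  · subst h; rw [negLast_last, negLast_last, neg_neg]
  · have h' : (i : ℕ) ≠ n0 := by intro e; exact h (Fin.ext e)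
    rw [negLast_apply_ne _ i h', negLast_apply_ne _ i h']

lemma starPP_val (μ : ZPP (n0 + 1)) : (starPP μ).1 = negLast μ.1 := rfl

lemma isPP_negLast {μ : Fin (n0 + 1) → ℤ} (h : IsPP μ) : IsPP (negLast μ) :=
  (starPP ⟨μ, h⟩).2

lemma isPP_negLast_iff {μ : Fin (n0 + 1) → ℤ} : IsPP (negLast μ) ↔ IsPP μ := by
  constructor
  · intro h; have := isPP_negLast h; rwa [negLast_negLast] at this
  · exact isPP_negLast

lemma starPP_eq {μ : Fin (n0 + 1) → ℤ} (h : IsPP μ) (h' : IsPP (negLast μ)) :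
    (⟨negLast μ, h'⟩ : ZPP (n0 + 1)) = starPP ⟨μ, h⟩ := rfl

lemma starPP_starPP (μ : ZPP (n0 + 1)) : starPP (starPP μ) = μ :=
  Subtype.ext (by rw [starPP_val, starPP_val, negLast_negLast])

lemma interlace_negLast_of {l : Fin (n0 + 2) → ℤ} {μ : Fin (n0 + 1) → ℤ}
    (h : Interlace l μ) : Interlace l (negLast μ) := by
  obtain ⟨h1, h2, h3⟩ := h
  refine ⟨?_, ?_, ?_⟩
  · intro i hi
    rw [negLast_apply_ne μ _ (by simp; omega)]
    exact h1 i hi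
  · intro hn
    rw [negLast_apply_ne μ _ (by simp; omega)]
    exact h2 hn
  · have e : (⟨n0, by omega⟩ : Fin (n0 + 1)) = Fin.last n0 := rfl
    rw [e, negLast_last, abs_neg]
    exact h3

lemma interlace_negLast_iff {l : Fin (n0 + 2) → ℤ} {μ : Fin (n0 + 1) → ℤ} :
    Interlace l (negLast μ) ↔ Interlace l μ := by
  constructor
  · intro h; have := interlace_negLast_of h; rwa [negLast_negLast] at this
  · exact interlace_negLast_of

lemma lvec_negLast (l : Fin (n0 + 2) → ℤ) (μ : Fin (n0 + 1) → ℤ) :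
    lvec l (negLast μ) = lvec l μ := by
  funext i
  unfold lvec
  congr 1
  · by_cases h0 : (i : ℕ) = 0
    · simp [h0]
    · rw [if_neg h0, if_neg h0, negLast_apply_ne μ _ (by simp; have := i.isLt; omega)]
  · by_cases hn : (i : ℕ) = n0
    · rw [if_pos hn, if_pos hn, abs_negLast]
    · rw [if_neg hn, if_neg hn, negLast_apply_ne μ i hn]
lemma lsgn_negLast (l : Fin (n0 + 2) → ℤ) (μ : Fin (n0 + 1) → ℤ) :
    lsgn l (negLast μ) = -(lsgn l μ) := by
  unfold lsgn
  rw [negLast_last, abs_neg, Int.sign_neg]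
  ring

lemma mult_negLast (l : Fin (n0 + 2) → ℤ) (μ : Fin (n0 + 1) → ℤ) (k : ℤ) :
    mult l (negLast μ) k = mult l μ k := by
  unfold mult
  rw [lvec_negLast]

/-! ### The extension `λ = (μ, c)` -/

def extPP (μ : Fin (n0 + 1) → ℤ) (c : ℤ) : Fin (n0 + 2) → ℤ :=
  fun i => if h : (i : ℕ) < n0 + 1 then μ ⟨i, h⟩ else c

lemma extPP_lt (μ : Fin (n0 + 1) → ℤ) (c : ℤ) (i : Fin (n0 + 2)) (h : (i : ℕ) < n0 + 1) :
    extPP μ c i = μ ⟨i, h⟩ := dif_pos h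

lemma extPP_last (μ : Fin (n0 + 1) → ℤ) (c : ℤ) :
    extPP μ c (Fin.last (n0 + 1)) = c := dif_neg (by simp)

lemma isPP_extPP {μ : Fin (n0 + 1) → ℤ} (hμ : IsPP μ) (hl : 0 ≤ μ (Fin.last n0)) {c : ℤ}
    (hc : |c| ≤ μ (Fin.last n0)) : IsPP (extPP μ c) := by
  intro i j hij
  have hij' : (i : ℕ) < (j : ℕ) := hij
  have hi : (i : ℕ) < n0 + 1 := by have := j.isLt; omega
  rw [extPP_lt μ c i hi]
  -- auxiliary: μ (last) ≤ μ ⟨i, hi⟩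
  have hlast : μ (Fin.last n0) ≤ μ ⟨(i : ℕ), hi⟩ := by
    by_cases h : (i : ℕ) = n0
    · have : (⟨(i : ℕ), hi⟩ : Fin (n0 + 1)) = Fin.last n0 := Fin.ext h
      rw [this]
    · have := hμ ⟨(i : ℕ), hi⟩ (Fin.last n0)
        (by rw [Fin.lt_def]; simp only [Fin.val_last]; omega)
      calc μ (Fin.last n0) ≤ |μ (Fin.last n0)| := le_abs_self _
        _ ≤ _ := this
  by_cases hj : (j : ℕ) < n0 + 1
  · rw [extPP_lt μ c j hj]
    exact hμ ⟨i, hi⟩ ⟨j, hj⟩ (by rw [Fin.lt_def]; exact hij')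
  · have : j = Fin.last (n0 + 1) := Fin.ext (by have := j.isLt; simp; omega)
    rw [this, extPP_last]
    exact le_trans hc hlast
lemma extPP_mk (μ : Fin (n0 + 1) → ℤ) (c : ℤ) (i : ℕ) (h : i < n0 + 1) (h2 : i < n0 + 2) :
    extPP μ c ⟨i, h2⟩ = μ ⟨i, h⟩ := dif_pos h

lemma extPP_castSucc (μ : Fin (n0 + 1) → ℤ) (c : ℤ) (i : Fin (n0 + 1)) :
    extPP μ c i.castSucc = μ i := by
  rw [extPP_lt μ c i.castSucc (by have := i.isLt; simp; omega)]
  rfl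

lemma extPP_succ (μ : Fin (n0 + 1) → ℤ) (c : ℤ) (i : Fin (n0 + 1)) (h : (i : ℕ) < n0) :
    extPP μ c i.succ = μ ⟨(i : ℕ) + 1, by omega⟩ := by
  rw [extPP_lt μ c i.succ (by simp [Fin.val_succ]; omega)]
  rfl

section ExtSelf

variable {μ : Fin (n0 + 1) → ℤ} (hμ : IsPP μ) (hl : 0 ≤ μ (Fin.last n0)) {c : ℤ}
  (hc : |c| ≤ μ (Fin.last n0))

include hμ hl in
lemma pp_nonneg_last (i : Fin (n0 + 1)) : μ (Fin.last n0) ≤ μ i ∧ 0 ≤ μ i := by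
  by_cases h : i = Fin.last n0
  · subst h; exact ⟨le_refl _, hl⟩
  · have hi : (i : ℕ) < n0 := by
      have h1 := i.isLt
      have h2 : (i : ℕ) ≠ n0 := fun e => h (Fin.ext e)
      omega
    have h1 := hμ i (Fin.last n0) (by rw [Fin.lt_def]; simp only [Fin.val_last]; omega)
    exact ⟨le_trans (le_abs_self _) h1, le_trans (abs_nonneg _) h1⟩

include hμ hl hc in
lemma interlace_extPP_self : Interlace (extPP μ c) μ := by
  refine ⟨?_, ?_, ?_⟩
  · intro i hi
    rw [extPP_mk μ c i (by omega) (by omega), extPP_mk μ c (i + 2) (by omega) (by omega)]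
    refine ⟨le_refl _, ?_⟩
    refine le_trans (le_abs_self _) (hμ ⟨i, by omega⟩ ⟨i + 2, by omega⟩ ?_)
    show i < i + 2
    omega
  · intro hn
    rw [extPP_mk μ c (n0 - 1) (by omega) (by omega)]
    have e : (⟨n0 + 1, by omega⟩ : Fin (n0 + 2)) = Fin.last (n0 + 1) := rfl
    rw [e, extPP_last]
    exact ⟨le_refl _, le_trans hc (pp_nonneg_last hμ hl ⟨n0 - 1, by omega⟩).1⟩
  · rw [extPP_mk μ c n0 (by omega) (by omega)]
    have e : (⟨n0, by omega⟩ : Fin (n0 + 1)) = Fin.last n0 := rfl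
    rw [e, abs_of_nonneg hl]

include hμ hl hc in
lemma lvec_extPP_self : lvec (extPP μ c) μ = 0 := by
  funext i
  unfold lvec
  have t1 : (if (i : ℕ) = 0 then extPP μ c i.castSucc
      else min (extPP μ c i.castSucc) (μ ⟨(i : ℕ) - 1, by have := i.isLt; omega⟩)) = μ i := by
    by_cases h0 : (i : ℕ) = 0
    · rw [if_pos h0, extPP_castSucc]
    · rw [if_neg h0, extPP_castSucc]
      apply min_eq_left
      refine le_trans (le_abs_self _) (hμ ⟨(i : ℕ) - 1, by have := i.isLt; omega⟩ i ?_)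
      show (i : ℕ) - 1 < (i : ℕ)
      omega
  have t2 : (if (i : ℕ) = n0 then max |extPP μ c (Fin.last (n0 + 1))| |μ (Fin.last n0)|
      else max (extPP μ c i.succ) (μ i)) = μ i := by
    by_cases hn : (i : ℕ) = n0
    · rw [if_pos hn, extPP_last]
      have e : i = Fin.last n0 := Fin.ext hn
      rw [e, abs_of_nonneg hl, max_eq_right hc]
    · have hi : (i : ℕ) < n0 := by have := i.isLt; omega
      rw [if_neg hn, extPP_succ μ c i hi]
      apply max_eq_right
      refine le_trans (le_abs_self _) (hμ i ⟨(i : ℕ) + 1, by omega⟩ ?_)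
      show (i : ℕ) < (i : ℕ) + 1
      omega
  rw [t1, t2]
  simp

omit hμ in
include hl hc in
lemma lsgn_extPP_self : lsgn (extPP μ c) μ = c := by
  unfold lsgn
  rw [extPP_last]
  rcases lt_or_eq_of_le hl with h | h
  · have hm : min |c| |μ (Fin.last n0)| = |c| := min_eq_left (le_trans hc (le_abs_self _))
    rw [hm, Int.sign_eq_one_of_pos h]
    rcases lt_trichotomy c 0 with h' | h' | h'
    · rw [Int.sign_eq_neg_one_of_neg h', abs_of_neg h']; ring
    · subst h'; simp
    · rw [Int.sign_eq_one_of_pos h', abs_of_pos h']; ring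
  · have hc0 : c = 0 := by
      rw [← h] at hc
      exact abs_nonpos_iff.mp hc
    subst hc0
    simp

end ExtSelf
/-! ### Bounds from interlacing with `extPP μ c` -/

lemma interlace_extPP_bounds {μ : Fin (n0 + 1) → ℤ} {c : ℤ} {ν : Fin (n0 + 1) → ℤ}
    (h : Interlace (extPP μ c) ν) :
    (∀ i : Fin (n0 + 1), (i : ℕ) < n0 → ν i ≤ μ i) ∧
      |ν (Fin.last n0)| ≤ μ (Fin.last n0) := by
  obtain ⟨h1, h2, h3⟩ := h
  constructor
  · intro i hi
    by_cases hcase : (i : ℕ) + 2 ≤ n0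
    · have := (h1 (i : ℕ) hcase).1
      rw [extPP_mk μ c (i : ℕ) (by omega) (by omega)] at this
      have e : (⟨(i : ℕ), by omega⟩ : Fin (n0 + 1)) = i := Fin.ext rfl
      rwa [e] at this
    · have hi' : (i : ℕ) = n0 - 1 := by omega
      have hn : 1 ≤ n0 := by omega
      have := (h2 hn).1
      rw [extPP_mk μ c (n0 - 1) (by omega) (by omega)] at this
      have e : (⟨n0 - 1, by omega⟩ : Fin (n0 + 1)) = i := Fin.ext (by simp [hi'])
      rwa [e] at this
  · have := h3
    rw [extPP_mk μ c n0 (by omega) (by omega)] at this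
    have e : (⟨n0, by omega⟩ : Fin (n0 + 1)) = Fin.last n0 := rfl
    rwa [e] at this

/-! ### The weight -/

def Wint (ν : Fin (n0 + 1) → ℤ) : ℤ :=
  (∑ i : Fin n0, ν i.castSucc) + |ν (Fin.last n0)|

lemma Wint_nonneg {ν : Fin (n0 + 1) → ℤ} (hν : IsPP ν) : 0 ≤ Wint ν := by
  unfold Wint
  have h1 : ∀ i : Fin n0, 0 ≤ ν i.castSucc := by
    intro i
    have := hν i.castSucc (Fin.last n0)
      (by rw [Fin.lt_def]; simp only [Fin.val_last, Fin.coe_castSucc]; exact i.isLt)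
    exact le_trans (abs_nonneg _) this
  have := Finset.sum_nonneg (s := Finset.univ) (fun i _ => h1 i)
  have := abs_nonneg (ν (Fin.last n0))
  omega

lemma Wint_negLast (ν : Fin (n0 + 1) → ℤ) : Wint (negLast ν) = Wint ν := by
  unfold Wint
  rw [abs_negLast]
  congr 1
  apply Finset.sum_congr rfl
  intro i _
  exact negLast_apply_ne ν i.castSucc (Nat.ne_of_lt i.isLt)

lemma Wint_lt_of_ne {μ : Fin (n0 + 1) → ℤ} (hμl : 0 ≤ μ (Fin.last n0))
    {ν : Fin (n0 + 1) → ℤ}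
    (hb : ∀ i : Fin (n0 + 1), (i : ℕ) < n0 → ν i ≤ μ i)
    (hlast : |ν (Fin.last n0)| ≤ μ (Fin.last n0))
    (hne1 : ν ≠ μ) (hne2 : ν ≠ negLast μ) : Wint ν < Wint μ := by
  have hterm : ∀ i : Fin n0, ν i.castSucc ≤ μ i.castSucc := fun i =>
    hb i.castSucc i.isLt
  have hsum : (∑ i : Fin n0, ν i.castSucc) ≤ ∑ i : Fin n0, μ i.castSucc :=
    Finset.sum_le_sum (fun i _ => hterm i)
  have hle : Wint ν ≤ Wint μ := by
    unfold Wint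
    have : |μ (Fin.last n0)| = μ (Fin.last n0) := abs_of_nonneg hμl
    omega
  rcases lt_or_eq_of_le hle with h | h
  · exact h
  -- equality case: derive contradiction
  exfalso
  have hsum_eq : (∑ i : Fin n0, ν i.castSucc) = ∑ i : Fin n0, μ i.castSucc := by
    unfold Wint at h
    have : |μ (Fin.last n0)| = μ (Fin.last n0) := abs_of_nonneg hμl
    omega
  have habs_eq : |ν (Fin.last n0)| = μ (Fin.last n0) := by
    unfold Wint at h
    have : |μ (Fin.last n0)| = μ (Fin.last n0) := abs_of_nonneg hμl
    omega
  have hcomp : ∀ i : Fin n0, ν i.castSucc = μ i.castSucc := by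
    have h0 : (∑ i : Fin n0, (μ i.castSucc - ν i.castSucc)) = 0 := by
      rw [Finset.sum_sub_distrib]
      omega
    have := (Finset.sum_eq_zero_iff_of_nonneg
      (fun i _ => by have := hterm i; omega)).mp h0
    intro i
    have := this i (Finset.mem_univ i)
    omega
  rcases abs_eq hμl |>.mp habs_eq with he | he
  · apply hne1
    funext j
    rcases Fin.eq_castSucc_or_eq_last j with ⟨j', rfl⟩ | rfl
    · exact hcomp j'
    · exact he
  · apply hne2
    funext j
    rcases Fin.eq_castSucc_or_eq_last j with ⟨j', rfl⟩ | rfl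
    · rw [negLast_apply_ne μ j'.castSucc (Nat.ne_of_lt j'.isLt)]
      exact hcomp j'
    · rw [negLast_last]
      exact he
/-! ### The summand of `rSO` -/

noncomputable def gterm (l : Fin (n0 + 2) → ℤ) (p : ℤ) (μ : Fin (n0 + 1) → ℤ) : FSO n0 :=
  if h : IsPP μ ∧ Interlace l μ then
    ∑ k ∈ Finset.Icc (0 : ℤ) (∑ i, lvec l μ i),
      (mult l μ k : ℤ) •
        Finsupp.single ((⟨μ, h.1⟩ : ZPP (n0 + 1)),
          p + lsgn l μ + 2 * k - ∑ i, lvec l μ i) 1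
  else 0

noncomputable def boxSO (l : Fin (n0 + 2) → ℤ) : Finset (Fin (n0 + 1) → ℤ) :=
  Finset.Icc (fun _ : Fin (n0 + 1) => -(l 0)) (fun _ : Fin (n0 + 1) => l 0)

lemma rSO_eq (l : Fin (n0 + 2) → ℤ) (p : ℤ) :
    rSO l p = ∑ μ ∈ boxSO l, gterm l p μ := rfl

lemma mem_boxSO {l : Fin (n0 + 2) → ℤ} {ν : Fin (n0 + 1) → ℤ} :
    ν ∈ boxSO l ↔ ∀ i, -(l 0) ≤ ν i ∧ ν i ≤ l 0 := by
  unfold boxSO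
  rw [Finset.mem_Icc]
  constructor
  · intro ⟨h1, h2⟩ i
    exact ⟨h1 i, h2 i⟩
  · intro h
    exact ⟨fun i => (h i).1, fun i => (h i).2⟩

lemma negLast_mem_boxSO {l : Fin (n0 + 2) → ℤ} {ν : Fin (n0 + 1) → ℤ}
    (h : ν ∈ boxSO l) : negLast ν ∈ boxSO l := by
  rw [mem_boxSO] at h ⊢
  intro i
  by_cases hi : i = Fin.last n0
  · subst hi
    rw [negLast_last]
    have := h (Fin.last n0)
    omega
  · rw [negLast_apply_ne ν i (fun e => hi (Fin.ext e))]
    exact h i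

lemma gterm_negLast_eq_zero {l : Fin (n0 + 2) → ℤ} {p : ℤ} {ν : Fin (n0 + 1) → ℤ}
    (h : ¬(IsPP ν ∧ Interlace l ν)) : gterm l p ν = 0 := dif_neg h

/-- Pair formula: for `ν` satisfying the conditions,
`gterm ν + gterm (negLast ν)` is a sum of paired generators. -/
lemma gterm_pair (l : Fin (n0 + 2) → ℤ) (p : ℤ) (ν : Fin (n0 + 1) → ℤ)
    (h : IsPP ν ∧ Interlace l ν) :
    gterm l p ν + gterm l p (negLast ν) =
      ∑ k ∈ Finset.Icc (0 : ℤ) (∑ i, lvec l ν i),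
        (mult l ν k : ℤ) •
          (Finsupp.single ((⟨ν, h.1⟩ : ZPP (n0 + 1)),
              (p + 2 * k - ∑ i, lvec l ν i) + lsgn l ν) 1 +
            Finsupp.single (starPP ⟨ν, h.1⟩,
              (p + 2 * k - ∑ i, lvec l ν i) - lsgn l ν) 1) := by
  have h' : IsPP (negLast ν) ∧ Interlace l (negLast ν) :=
    ⟨isPP_negLast h.1, interlace_negLast_of h.2⟩
  unfold gterm
  rw [dif_pos h, dif_pos h']
  simp only [lvec_negLast, lsgn_negLast, mult_negLast]
  rw [← Finset.sum_add_distrib]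
  refine Finset.sum_congr rfl fun k _ => ?_
  rw [← smul_add, starPP_eq h.1 h'.1]
  have e1 : p + lsgn l ν + 2 * k - (∑ i, lvec l ν i) =
      (p + 2 * k - ∑ i, lvec l ν i) + lsgn l ν := by ring
  have e2 : p + -lsgn l ν + 2 * k - (∑ i, lvec l ν i) =
      (p + 2 * k - ∑ i, lvec l ν i) - lsgn l ν := by ring
  rw [e1, e2]
/-- If the conditions hold and the last entry vanishes, `gterm` itself is a
combination of type-(i) generators. -/
lemma gterm_mem_zero {l : Fin (n0 + 2) → ℤ} {p : ℤ} {ν : Fin (n0 + 1) → ℤ}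
    (S : Submodule ℤ (FSO n0))
    (hgen : ∀ (h : IsPP ν ∧ Interlace l ν), ∀ q : ℤ,
      Finsupp.single ((⟨ν, h.1⟩ : ZPP (n0 + 1)), q) 1 ∈ S) :
    gterm l p ν ∈ S := by
  unfold gterm
  by_cases h : IsPP ν ∧ Interlace l ν
  · rw [dif_pos h]
    apply Submodule.sum_mem
    intro k _
    exact Submodule.smul_mem S _ (hgen h _)
  · rw [dif_neg h]
    exact Submodule.zero_mem S

/-- If the conditions hold, `gterm ν + gterm (negLast ν)` is a combination of
type-(ii) style generators. -/
lemma gterm_pair_mem {l : Fin (n0 + 2) → ℤ} {p : ℤ} {ν : Fin (n0 + 1) → ℤ}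
    (S : Submodule ℤ (FSO n0))
    (hgen : ∀ (h : IsPP ν ∧ Interlace l ν), ∀ q s : ℤ,
      Finsupp.single ((⟨ν, h.1⟩ : ZPP (n0 + 1)), q + s) 1 +
        Finsupp.single (starPP ⟨ν, h.1⟩, q - s) 1 ∈ S) :
    gterm l p ν + gterm l p (negLast ν) ∈ S := by
  by_cases h : IsPP ν ∧ Interlace l ν
  · rw [gterm_pair l p ν h]
    apply Submodule.sum_mem
    intro k _
    exact Submodule.smul_mem S _ (hgen h _ _)
  · have h2 : ¬(IsPP (negLast ν) ∧ Interlace l (negLast ν)) := by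
      intro ⟨ha, hb⟩
      exact h ⟨isPP_negLast_iff.mp ha, interlace_negLast_iff.mp hb⟩
    rw [gterm_negLast_eq_zero h, gterm_negLast_eq_zero h2, add_zero]
    exact Submodule.zero_mem S

/-- Key summation lemma: a sum of `gterm` over a set closed under `negLast`
lies in `S` provided the corresponding generators do. -/
lemma sum_gterm_mem (l : Fin (n0 + 2) → ℤ) (p : ℤ) (S : Submodule ℤ (FSO n0))
    (T : Finset (Fin (n0 + 1) → ℤ)) (hcl : ∀ ν ∈ T, negLast ν ∈ T)
    (hgen0 : ∀ ν ∈ T, ν (Fin.last n0) = 0 → ∀ (h : IsPP ν ∧ Interlace l ν), ∀ q : ℤ,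
      Finsupp.single ((⟨ν, h.1⟩ : ZPP (n0 + 1)), q) 1 ∈ S)
    (hgen1 : ∀ ν ∈ T, ν (Fin.last n0) ≠ 0 → ∀ (h : IsPP ν ∧ Interlace l ν), ∀ q s : ℤ,
      Finsupp.single ((⟨ν, h.1⟩ : ZPP (n0 + 1)), q + s) 1 +
        Finsupp.single (starPP ⟨ν, h.1⟩, q - s) 1 ∈ S) :
    (∑ ν ∈ T, gterm l p ν) ∈ S := by
  induction T using Finset.strongInduction with
  | _ T ih =>
    rcases Finset.eq_empty_or_nonempty T with rfl | ⟨a, ha⟩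
    · simp
    by_cases h0 : a (Fin.last n0) = 0
    · -- `negLast a = a`; remove a single element
      have haa : negLast a = a := by
        funext i
        by_cases hi : i = Fin.last n0
        · subst hi
          rw [negLast_last, h0]
          exact neg_zero
        · exact negLast_apply_ne a i (fun e => hi (Fin.ext e))
      rw [← Finset.add_sum_erase T _ ha]
      apply Submodule.add_mem
      · exact gterm_mem_zero S (fun h q => hgen0 a ha h0 h q)
      · refine ih (T.erase a) (Finset.erase_ssubset ha) ?_ ?_ ?_
        · intro ν hν
          rw [Finset.mem_erase] at hν ⊢
          refine ⟨?_, hcl ν hν.2⟩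
          intro e
          apply hν.1
          rw [← negLast_negLast ν, e, haa]
        · intro ν hν
          exact hgen0 ν (Finset.mem_of_mem_erase hν)
        · intro ν hν
          exact hgen1 ν (Finset.mem_of_mem_erase hν)
    · -- remove the pair {a, negLast a}
      have hb : negLast a ∈ T := hcl a ha
      have hba : negLast a ≠ a := by
        intro e
        apply h0
        have := congrFun e (Fin.last n0)
        rw [negLast_last] at this
        omega
      have hb' : negLast a ∈ T.erase a := Finset.mem_erase.mpr ⟨hba, hb⟩
      rw [← Finset.add_sum_erase T _ ha, ← Finset.add_sum_erase _ _ hb', ← add_assoc]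
      apply Submodule.add_mem
      · exact gterm_pair_mem S (fun h q s => hgen1 a ha h0 h q s)
      · refine ih ((T.erase a).erase (negLast a))
          (Finset.ssubset_of_subset_of_ssubset (Finset.erase_subset _ _)
            (Finset.erase_ssubset ha)) ?_ ?_ ?_
        · intro ν hν
          rw [Finset.mem_erase, Finset.mem_erase] at hν ⊢
          refine ⟨?_, ?_, hcl ν hν.2.2⟩
          · intro e
            apply hν.2.1
            rw [← negLast_negLast ν, e, negLast_negLast]
          · intro e
            apply hν.1
            rw [← negLast_negLast ν, e]
        · intro ν hν
          exact hgen0 ν (Finset.mem_of_mem_erase (Finset.mem_of_mem_erase hν))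
        · intro ν hν
          exact hgen1 ν (Finset.mem_of_mem_erase (Finset.mem_of_mem_erase hν))
lemma mult_zero_of_lvec_zero (l : Fin (n0 + 2) → ℤ) (ν : Fin (n0 + 1) → ℤ)
    (h : lvec l ν = 0) : mult l ν 0 = 1 := by
  unfold mult
  rw [h, Finset.Icc_self, Finset.filter_singleton]
  simp

section MainTerm

variable {μ : Fin (n0 + 1) → ℤ} (hμ : IsPP μ) (hl : 0 ≤ μ (Fin.last n0)) {c : ℤ}
  (hc : |c| ≤ μ (Fin.last n0))

include hμ hl hc in
lemma gterm_extPP_self (p : ℤ) :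
    gterm (extPP μ c) p μ = Finsupp.single ((⟨μ, hμ⟩ : ZPP (n0 + 1)), p + c) 1 := by
  have h : IsPP μ ∧ Interlace (extPP μ c) μ := ⟨hμ, interlace_extPP_self hμ hl hc⟩
  unfold gterm
  rw [dif_pos h]
  simp only [lvec_extPP_self hμ hl hc, lsgn_extPP_self hl hc, Pi.zero_apply,
    Finset.sum_const_zero]
  rw [Finset.Icc_self, Finset.sum_singleton,
    mult_zero_of_lvec_zero _ _ (lvec_extPP_self hμ hl hc)]
  have e : p + c + 2 * 0 - 0 = p + c := by ring
  rw [e]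
  simp

include hμ hl hc in
lemma gterm_extPP_negLast (p : ℤ) :
    gterm (extPP μ c) p (negLast μ) =
      Finsupp.single (starPP (⟨μ, hμ⟩ : ZPP (n0 + 1)), p - c) 1 := by
  have h0 : IsPP μ ∧ Interlace (extPP μ c) μ := ⟨hμ, interlace_extPP_self hμ hl hc⟩
  have h : IsPP (negLast μ) ∧ Interlace (extPP μ c) (negLast μ) :=
    ⟨isPP_negLast hμ, interlace_negLast_of h0.2⟩
  unfold gterm
  rw [dif_pos h]
  simp only [lvec_negLast, lsgn_negLast, mult_negLast,
    lvec_extPP_self hμ hl hc, lsgn_extPP_self hl hc, Pi.zero_apply,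
    Finset.sum_const_zero]
  rw [Finset.Icc_self, Finset.sum_singleton,
    mult_zero_of_lvec_zero _ _ (lvec_extPP_self hμ hl hc)]
  have e : p + -c + 2 * 0 - 0 = p - c := by ring
  rw [e, starPP_eq hμ h.1]
  simp

include hμ hl in
lemma pp_abs_le_head (i : Fin (n0 + 1)) : |μ i| ≤ μ 0 := by
  rcases eq_or_lt_of_le (Fin.zero_le i) with h | h
  · rw [← h, abs_of_nonneg (pp_nonneg_last hμ hl 0).2]
  · exact hμ 0 i h

include hμ hl hc in
lemma self_mem_boxSO : μ ∈ boxSO (extPP μ c) := by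
  rw [mem_boxSO]
  have h0 : extPP μ c 0 = μ 0 := extPP_mk μ c 0 (by omega) (by omega)
  intro i
  rw [h0]
  have := pp_abs_le_head hμ hl i
  constructor
  · have := neg_abs_le (μ i); omega
  · have := le_abs_self (μ i); omega

end MainTerm
/-- The span of the restriction elements. -/
noncomputable def ASO (n0 : ℕ) : Submodule ℤ (FSO n0) :=
  Submodule.span ℤ
    {x : FSO n0 | ∃ (l : Fin (n0 + 2) → ℤ) (p : ℤ), IsPP l ∧ x = rSO l p}

lemma main_mem (w : ℕ) : ∀ μ : ZPP (n0 + 1), (Wint μ.1).toNat ≤ w →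
    (μ.1 (Fin.last n0) = 0 → ∀ q : ℤ, Finsupp.single (μ, q) 1 ∈ ASO n0) ∧
    (μ.1 (Fin.last n0) ≠ 0 → ∀ q s : ℤ,
      Finsupp.single (μ, q + s) 1 + Finsupp.single (starPP μ, q - s) 1 ∈ ASO n0) := by
  induction w using Nat.strong_induction_on with
  | _ w IH =>
  -- the key statement, assuming the last entry is nonnegative
  have key : ∀ μ : ZPP (n0 + 1), (Wint μ.1).toNat ≤ w → 0 ≤ μ.1 (Fin.last n0) →
      (μ.1 (Fin.last n0) = 0 → ∀ q : ℤ, Finsupp.single (μ, q) 1 ∈ ASO n0) ∧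
      (0 < μ.1 (Fin.last n0) → ∀ q s : ℤ,
        Finsupp.single (μ, q + s) 1 + Finsupp.single (starPP μ, q - s) 1 ∈ ASO n0) := by
    intro μ hw hl
    -- Step 1: decomposition of rSO for l = extPP μ.1 c
    have hdecomp : ∀ c : ℤ, |c| ≤ μ.1 (Fin.last n0) → ∀ p : ℤ,
        (∑ ν ∈ ({μ.1, negLast μ.1} : Finset (Fin (n0 + 1) → ℤ)),
          gterm (extPP μ.1 c) p ν) ∈ ASO n0 := by
      intro c hc p
      set l : Fin (n0 + 2) → ℤ := extPP μ.1 c with hldef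
      set T0 : Finset (Fin (n0 + 1) → ℤ) := {μ.1, negLast μ.1} with hT0def
      have hT0 : T0 ⊆ boxSO l := by
        intro ν hν
        rcases Finset.mem_insert.mp hν with rfl | hν
        · exact self_mem_boxSO μ.2 hl hc
        · rw [Finset.mem_singleton] at hν
          subst hν
          exact negLast_mem_boxSO (self_mem_boxSO μ.2 hl hc)
      have hr : (∑ ν ∈ boxSO l, gterm l p ν) ∈ ASO n0 := by
        rw [← rSO_eq]
        exact Submodule.subset_span ⟨l, p, isPP_extPP μ.2 hl hc, rfl⟩
      -- every interlacing ν outside T0 has smaller weight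
      have hWlt : ∀ ν ∈ boxSO l \ T0, IsPP ν ∧ Interlace l ν → (Wint ν).toNat < w := by
        intro ν hν h
        rw [Finset.mem_sdiff] at hν
        have hne1 : ν ≠ μ.1 := fun e => hν.2 (Finset.mem_insert.mpr (Or.inl e))
        have hne2 : ν ≠ negLast μ.1 := fun e =>
          hν.2 (Finset.mem_insert.mpr (Or.inr (Finset.mem_singleton.mpr e)))
        have hbd := interlace_extPP_bounds h.2
        have hlt : Wint ν < Wint μ.1 := Wint_lt_of_ne hl hbd.1 hbd.2 hne1 hne2
        have h1 : 0 ≤ Wint ν := Wint_nonneg h.1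
        have h2 : 0 ≤ Wint μ.1 := Wint_nonneg μ.2
        omega
      have hrest : (∑ ν ∈ boxSO l \ T0, gterm l p ν) ∈ ASO n0 := by
        apply sum_gterm_mem
        · -- closure under negLast
          intro ν hν
          rw [Finset.mem_sdiff] at hν ⊢
          refine ⟨negLast_mem_boxSO hν.1, ?_⟩
          intro hmem
          apply hν.2
          rcases Finset.mem_insert.mp hmem with e | e
          · refine Finset.mem_insert.mpr (Or.inr (Finset.mem_singleton.mpr ?_))
            rw [← negLast_negLast ν, e]
          · rw [Finset.mem_singleton] at e
            refine Finset.mem_insert.mpr (Or.inl ?_)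
            rw [← negLast_negLast ν, e, negLast_negLast]
        · intro ν hν h0 h q
          exact (IH (Wint ν).toNat (hWlt ν hν h) ⟨ν, h.1⟩ le_rfl).1 h0 q
        · intro ν hν h0 h q s
          exact (IH (Wint ν).toNat (hWlt ν hν h) ⟨ν, h.1⟩ le_rfl).2 h0 q s
      have hEq : (∑ ν ∈ T0, gterm l p ν) =
          (∑ ν ∈ boxSO l, gterm l p ν) - ∑ ν ∈ boxSO l \ T0, gterm l p ν := by
        rw [← Finset.sum_sdiff (f := gterm l p) hT0]
        abel
      rw [hEq]
      exact Submodule.sub_mem _ hr hrest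
    -- Step 2: extracting the generators
    have core0 : μ.1 (Fin.last n0) = 0 → ∀ q : ℤ, Finsupp.single (μ, q) 1 ∈ ASO n0 := by
      intro h0 q
      have hc : |(0 : ℤ)| ≤ μ.1 (Fin.last n0) := by simp; omega
      have := hdecomp 0 hc q
      have haa : negLast μ.1 = μ.1 := by
        funext i
        by_cases hi : i = Fin.last n0
        · subst hi
          rw [negLast_last, h0]
          exact neg_zero
        · exact negLast_apply_ne μ.1 i (fun e => hi (Fin.ext e))
      rw [haa, Finset.insert_eq_self.mpr (Finset.mem_singleton_self _),
        Finset.sum_singleton, gterm_extPP_self μ.2 hl hc q] at this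
      have e : q + 0 = q := by ring
      rw [e] at this
      have e2 : (⟨μ.1, μ.2⟩ : ZPP (n0 + 1)) = μ := rfl
      rwa [e2] at this
    have core1 : 0 < μ.1 (Fin.last n0) → ∀ (p c : ℤ), |c| ≤ μ.1 (Fin.last n0) →
        Finsupp.single (μ, p + c) 1 + Finsupp.single (starPP μ, p - c) 1 ∈ ASO n0 := by
      intro hpos p c hc
      have hne : μ.1 ≠ negLast μ.1 := by
        intro e
        have := congrFun e (Fin.last n0)
        rw [negLast_last] at this
        omega
      have := hdecomp c hc p
      rw [Finset.sum_pair hne, gterm_extPP_self μ.2 hl hc p,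
        gterm_extPP_negLast μ.2 hl hc p] at this
      have e2 : (⟨μ.1, μ.2⟩ : ZPP (n0 + 1)) = μ := rfl
      rwa [e2] at this
    refine ⟨core0, ?_⟩
    -- Step 3: general shift s by induction on |s|
    intro hpos
    have pos2 : ∀ m : ℕ, ∀ q s : ℤ, s.natAbs ≤ m →
        Finsupp.single (μ, q + s) 1 + Finsupp.single (starPP μ, q - s) 1 ∈ ASO n0 := by
      intro m
      induction m with
      | zero =>
        intro q s hs
        have : s = 0 := by omega
        subst this
        exact core1 hpos q 0 (by simp; omega)
      | succ m ihm =>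
        intro q s hs
        by_cases hsmall : s.natAbs ≤ (μ.1 (Fin.last n0)).toNat
        · refine core1 hpos q s ?_
          rw [abs_le]
          omega
        · -- reduction step
          have step : ∀ t : ℤ,
              Finsupp.single (μ, (q + t) + (s - t)) 1 +
                Finsupp.single (starPP μ, (q + t) - (s - t)) 1 ∈ ASO n0 →
              Finsupp.single (μ, (q - s + t) + t) 1 +
                Finsupp.single (starPP μ, (q - s + t) - t) 1 ∈ ASO n0 →
              Finsupp.single (μ, (q - s + 2 * t) + 0) 1 +
                Finsupp.single (starPP μ, (q - s + 2 * t) - 0) 1 ∈ ASO n0 →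
              Finsupp.single (μ, q + s) 1 + Finsupp.single (starPP μ, q - s) 1 ∈ ASO n0 := by
            intro t h1 h2 h3
            have hx : (Finsupp.single (μ, q + s) 1 + Finsupp.single (starPP μ, q - s) 1 : FSO n0) =
                (Finsupp.single (μ, (q + t) + (s - t)) 1 +
                  Finsupp.single (starPP μ, (q + t) - (s - t)) 1) +
                (Finsupp.single (μ, (q - s + t) + t) 1 +
                  Finsupp.single (starPP μ, (q - s + t) - t) 1) -
                (Finsupp.single (μ, (q - s + 2 * t) + 0) 1 +
                  Finsupp.single (starPP μ, (q - s + 2 * t) - 0) 1) := by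
              have e1 : (q + t) + (s - t) = q + s := by ring
              have e2 : (q + t) - (s - t) = q - s + 2 * t := by ring
              have e3 : (q - s + t) + t = q - s + 2 * t := by ring
              have e4 : (q - s + t) - t = q - s := by ring
              have e5 : (q - s + 2 * t) + 0 = q - s + 2 * t := by ring
              have e6 : (q - s + 2 * t) - 0 = q - s + 2 * t := by ring
              rw [e1, e2, e3, e4, e5, e6]
              abel
            rw [hx]
            exact Submodule.sub_mem _ (Submodule.add_mem _ h1 h2) h3
          set b : ℤ := μ.1 (Fin.last n0) with hb
          have hbabs : |b| ≤ b := by rw [abs_of_pos hpos]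
          by_cases hspos : 0 < s
          · refine step b (ihm _ _ ?_) (core1 hpos _ b hbabs) (core1 hpos _ 0 (by simp; omega))
            have : |s| = s := abs_of_pos hspos
            omega
          · refine step (-b) (ihm _ _ ?_) ?_ (core1 hpos _ 0 (by simp; omega))
            · have : |s| = -s := abs_of_nonpos (by omega)
              omega
            · refine core1 hpos _ (-b) ?_
              rw [abs_neg, abs_of_pos hpos]
    intro q s
    exact pos2 s.natAbs q s le_rfl
  -- conclude: reduce the general case to `key`
  intro μ hw
  constructor
  · intro h0 q
    exact (key μ hw (by omega)).1 h0 q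
  · intro hne q s
    rcases lt_or_gt_of_ne hne with hneg | hpos
    · -- negative last entry: pass to starPP μ
      set ν : ZPP (n0 + 1) := starPP μ with hν
      have hν1 : ν.1 = negLast μ.1 := rfl
      have hνlast : ν.1 (Fin.last n0) = -(μ.1 (Fin.last n0)) := by
        rw [hν1, negLast_last]
      have hwν : (Wint ν.1).toNat ≤ w := by
        rw [hν1, Wint_negLast]
        exact hw
      have := (key ν hwν (by omega)).2 (by omega) q (-s)
      rw [starPP_starPP] at this
      have e1 : q + -s = q - s := by ring
      have e2 : q - -s = q + s := by ring
      rw [e1, e2] at this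
      have h2 : (Finsupp.single (μ, q + s) 1 + Finsupp.single (ν, q - s) 1 : FSO n0) =
          Finsupp.single (ν, q - s) 1 + Finsupp.single (μ, q + s) 1 := add_comm _ _
      rw [h2]
      exact this
    · exact (key μ hw (by omega)).2 hpos q s

/-- Description of the image `Res(K⁰(K))` of the restriction map for
`G = SO₀(2,2n)` (with `n = n0 + 2`): the `ℤ`-span of the restriction elements
`r(λ,p)` equals the `ℤ`-span of the basis elements `e_{(μ,q)}` with
`μ_{n−1} = 0` together with the elements `e_{(μ,q+s)} + e_{(μ*,q−s)}` with
`μ_{n−1} ≠ 0`. -/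
theorem so_image_of_restriction (n0 : ℕ) :
    Submodule.span ℤ
        {x : FSO n0 | ∃ (l : Fin (n0 + 2) → ℤ) (p : ℤ), IsPP l ∧ x = rSO l p}
      = Submodule.span ℤ
        ({x : FSO n0 | ∃ (μ : ZPP (n0 + 1)) (q : ℤ),
            μ.1 (Fin.last n0) = 0 ∧ x = Finsupp.single (μ, q) 1} ∪
          {x : FSO n0 | ∃ (μ : ZPP (n0 + 1)) (q s : ℤ),
            μ.1 (Fin.last n0) ≠ 0 ∧
              x = Finsupp.single (μ, q + s) 1 + Finsupp.single (starPP μ, q - s) 1}) := by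
  apply le_antisymm
  · rw [Submodule.span_le]
    rintro x ⟨l, p, hPP, rfl⟩
    rw [SetLike.mem_coe, rSO_eq]
    apply sum_gterm_mem
    · intro ν hν
      exact negLast_mem_boxSO hν
    · intro ν _ h0 h q
      exact Submodule.subset_span (Or.inl ⟨⟨ν, h.1⟩, q, h0, rfl⟩)
    · intro ν _ h0 h q s
      exact Submodule.subset_span (Or.inr ⟨⟨ν, h.1⟩, q, s, h0, rfl⟩)
  · rw [Submodule.span_le]
    rintro x (⟨μ, q, h0, rfl⟩ | ⟨μ, q, s, hne, rfl⟩)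
    · exact (main_mem (Wint μ.1).toNat μ le_rfl).1 h0 q
    · exact (main_mem (Wint μ.1).toNat μ le_rfl).2 hne q s
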